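/- For every pair of natural numbers p and every natural number m, and every real x with |x| < 1, the series ∑_{k=m}^{∞} x^k·(k+p)!/k! converges, and there exists a real polynomial P in two variables of total degree at most 2p (independent of m and x) such that ∑_{k=m}^{∞} x^k·(k+p)!/k! = (x^m/(1−x)^{p+1})·P(x, m) for all m ∈ ℕ and all x ∈ (−1,1). -/

import Mathlib

open MvPolynomial Finset

private lemma fact_prod_nat (m : ℕ) : ∀ p : ℕ, (m + p).factorial = m.factorial * ∏ i ∈ Finset.range p, (m + i + 1)
  | 0 => by simp
  | (p+1) => by
      rw [Finset.prod_range_succ, ← mul_assoc, ← fact_prod_nat m p, ← Nat.add_assoc,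
        Nat.factorial_succ, mul_comm]

private lemma fact_ratio (m p : ℕ) :
    (((m + p).factorial : ℝ) / (m.factorial : ℝ)) = ∏ i ∈ Finset.range p, ((m : ℝ) + i + 1) := by
  have h : (m.factorial : ℝ) ≠ 0 := by positivity
  rw [fact_prod_nat m p, Nat.cast_mul, mul_comm, mul_div_assoc, div_self h, mul_one]
  push_cast
  ring

private lemma my_totalDegree_aeval_le (g : Fin 2 → MvPolynomial (Fin 2) ℝ)
    (hg : ∀ i, (g i).totalDegree ≤ 1) (P : MvPolynomial (Fin 2) ℝ) :
    (MvPolynomial.aeval g P).totalDegree ≤ P.totalDegree := by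
  conv_lhs => rw [P.as_sum]
  rw [map_sum]
  refine MvPolynomial.totalDegree_finsetSum_le fun v hv => ?_
  rw [MvPolynomial.aeval_monomial]
  refine (MvPolynomial.totalDegree_mul _ _).trans ?_
  have h1 : ((algebraMap ℝ (MvPolynomial (Fin 2) ℝ)) (coeff v P)).totalDegree = 0 :=
    totalDegree_C _
  rw [h1, zero_add, Finsupp.prod]
  refine (totalDegree_finset_prod _ _).trans ?_
  refine le_trans ?_ (MvPolynomial.le_totalDegree hv)
  rw [Finsupp.sum]
  refine Finset.sum_le_sum fun i _ => (totalDegree_pow _ _).trans ?_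
  calc v i * (g i).totalDegree ≤ v i * 1 := Nat.mul_le_mul_left _ (hg i)
    _ = v i := mul_one _

private lemma my_eval_aeval (v : Fin 2 → ℝ) (g : Fin 2 → MvPolynomial (Fin 2) ℝ)
    (P : MvPolynomial (Fin 2) ℝ) :
    eval v (MvPolynomial.aeval g P) = eval (fun i => eval v (g i)) P := by
  show eval v (bind₁ g P) = _
  rw [show (eval v : MvPolynomial (Fin 2) ℝ →+* ℝ) = eval₂Hom (RingHom.id ℝ) v from rfl,
    eval₂Hom_bind₁]
  rfl

private lemma aux_summable (p m : ℕ) {x : ℝ} (hx : |x| < 1) :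
    Summable (fun k : ℕ => x ^ (k + m) * (((k + m + p).factorial : ℝ) / ((k + m).factorial : ℝ))) := by
  have hx' : ‖|x|‖ < 1 := by rwa [Real.norm_eq_abs, abs_abs]
  have h1 : Summable (fun k : ℕ => ((k : ℝ) + 1) ^ p * |x| ^ k) := by
    have heq : ∀ k : ℕ, ((k : ℝ) + 1) ^ p * |x| ^ k
        = ∑ i ∈ Finset.range (p + 1), ((k : ℝ) ^ i * |x| ^ k) * (p.choose i : ℝ) := by
      intro k
      rw [add_pow, Finset.sum_mul]
      exact Finset.sum_congr rfl fun i _ => by ring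
    rw [summable_congr heq]
    exact summable_sum fun i _ =>
      (summable_pow_mul_geometric_of_norm_lt_one i hx').mul_right _
  refine Summable.of_norm_bounded (h1.mul_left (((m : ℝ) + p + 1) ^ p)) ?_
  intro k
  have hr : (0:ℝ) ≤ ((k + m + p).factorial : ℝ) / ((k + m).factorial : ℝ) := by positivity
  rw [Real.norm_eq_abs, abs_mul, abs_pow, abs_of_nonneg hr]
  have h2 : (((k + m + p).factorial : ℝ) / ((k + m).factorial : ℝ))
      = ∏ i ∈ Finset.range p, (((k + m : ℕ) : ℝ) + i + 1) := fact_ratio (k + m) p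
  have h3 : ∏ i ∈ Finset.range p, (((k + m : ℕ) : ℝ) + i + 1)
      ≤ (((m : ℝ) + p + 1) * ((k : ℝ) + 1)) ^ p := by
    calc ∏ i ∈ Finset.range p, (((k + m : ℕ) : ℝ) + i + 1)
        ≤ ∏ _i ∈ Finset.range p, (((m : ℝ) + p + 1) * ((k : ℝ) + 1)) := by
          refine Finset.prod_le_prod (fun i _ => by positivity) (fun i hi => ?_)
          have hip : (i : ℝ) < p := by exact_mod_cast Finset.mem_range.1 hi
          push_cast
          nlinarith [Nat.cast_nonneg (α := ℝ) k, Nat.cast_nonneg (α := ℝ) m]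
      _ = (((m : ℝ) + p + 1) * ((k : ℝ) + 1)) ^ p := by
          rw [Finset.prod_const, Finset.card_range]
  have h4 : |x| ^ (k + m) ≤ |x| ^ k :=
    pow_le_pow_of_le_one (abs_nonneg x) hx.le (Nat.le_add_right k m)
  calc |x| ^ (k + m) * (((k + m + p).factorial : ℝ) / ((k + m).factorial : ℝ))
      ≤ |x| ^ k * ((((m : ℝ) + p + 1) * ((k : ℝ) + 1)) ^ p) := by
        refine mul_le_mul h4 (h2 ▸ h3) hr (by positivity)
    _ = ((m : ℝ) + p + 1) ^ p * (((k : ℝ) + 1) ^ p * |x| ^ k) := by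
        rw [mul_pow]; ring

private lemma step_term (p n : ℕ) (x : ℝ) :
    x ^ (n + 1) * (((n + p + 2).factorial : ℝ) / ((n + 1).factorial : ℝ))
      - x * (x ^ n * (((n + p + 1).factorial : ℝ) / (n.factorial : ℝ)))
    = ((p : ℝ) + 1) * (x ^ (n + 1) * (((n + p + 1).factorial : ℝ) / ((n + 1).factorial : ℝ))) := by
  have f1 : ((n + p + 2).factorial : ℝ) = ((n : ℝ) + p + 2) * ((n + p + 1).factorial : ℝ) := by
    rw [show n + p + 2 = (n + p + 1) + 1 from rfl, Nat.factorial_succ]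
    push_cast; ring
  have f2 : ((n + 1).factorial : ℝ) = ((n : ℝ) + 1) * (n.factorial : ℝ) := by
    rw [Nat.factorial_succ]; push_cast; ring
  have hn : (n.factorial : ℝ) ≠ 0 := by positivity
  have hn1 : ((n : ℝ) + 1) ≠ 0 := by positivity
  rw [f1, f2]
  field_simp
  ring

theorem stmt_1 (p : ℕ) :
    ∃ P : MvPolynomial (Fin 2) ℝ, P.totalDegree ≤ 2 * p ∧
      ∀ (m : ℕ) (x : ℝ), |x| < 1 →
        HasSum
          (fun k : ℕ => x ^ (k + m) * (((k + m + p).factorial : ℝ) / ((k + m).factorial : ℝ)))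
          (x ^ m / (1 - x) ^ (p + 1) * MvPolynomial.eval ![x, (m : ℝ)] P) := by
  induction p with
  | zero =>
    refine ⟨1, by simp, fun m x hx => ?_⟩
    have h := (hasSum_geometric_of_abs_lt_one hx).mul_right (x ^ m)
    have heq : (fun k : ℕ => x ^ (k + m) * (((k + m + 0).factorial : ℝ) / ((k + m).factorial : ℝ)))
        = fun k : ℕ => x ^ k * x ^ m := by
      funext k
      rw [Nat.add_zero, div_self (by positivity), mul_one, pow_add]
    rw [heq, show x ^ m / (1 - x) ^ (0 + 1) * MvPolynomial.eval ![x, (m : ℝ)] 1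
        = (1 - x)⁻¹ * x ^ m by rw [map_one, mul_one, zero_add, pow_one, div_eq_mul_inv, mul_comm]]
    exact h
  | succ p ih =>
    obtain ⟨P, hPdeg, hP⟩ := ih
    set g : Fin 2 → MvPolynomial (Fin 2) ℝ := ![X 0, X 1 + 1] with hg_def
    have hg : ∀ i, (g i).totalDegree ≤ 1 := by
      intro i
      fin_cases i
      · simp [hg_def, totalDegree_X]
      · simp only [hg_def, Matrix.cons_val_one, Matrix.head_cons]
        exact (totalDegree_add _ _).trans (by simp [totalDegree_X])
    set P' : MvPolynomial (Fin 2) ℝ := MvPolynomial.aeval g P with hP'_def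
    refine ⟨(1 - X 0) ^ (p + 1) * ∏ i ∈ Finset.range (p + 1), (X 1 + C ((i : ℝ) + 1))
        + C ((p : ℝ) + 1) * X 0 * P', ?_, ?_⟩
    · have d1 : ((1 : MvPolynomial (Fin 2) ℝ) - X 0).totalDegree ≤ 1 := by
        rw [sub_eq_add_neg]
        refine (totalDegree_add _ _).trans (max_le ?_ ?_)
        · rw [totalDegree_one]; omega
        · rw [totalDegree_neg, totalDegree_X]
      have d2 : ((1 - X 0 : MvPolynomial (Fin 2) ℝ) ^ (p + 1)).totalDegree ≤ (p + 1) * 1 :=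
        (totalDegree_pow _ _).trans (Nat.mul_le_mul_left _ d1)
      have d3 : (∏ i ∈ Finset.range (p + 1),
          (X 1 + C ((i : ℝ) + 1) : MvPolynomial (Fin 2) ℝ)).totalDegree ≤ (p + 1) • 1 := by
        refine (totalDegree_finset_prod _ _).trans ?_
        refine le_trans (Finset.sum_le_card_nsmul _ _ 1 fun i _ => ?_) (by
          rw [Finset.card_range])
        refine (totalDegree_add _ _).trans (max_le ?_ ?_)
        · rw [totalDegree_X]
        · rw [totalDegree_C]; omega
      have d4 : (C ((p : ℝ) + 1) * X 0 : MvPolynomial (Fin 2) ℝ).totalDegree ≤ 0 + 1 :=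
        (totalDegree_mul _ _).trans (add_le_add (totalDegree_C _).le (totalDegree_X _).le)
      have d5 : P'.totalDegree ≤ 2 * p := (my_totalDegree_aeval_le g hg P).trans hPdeg
      refine (totalDegree_add _ _).trans (max_le ?_ ?_)
      · refine (totalDegree_mul _ _).trans (le_trans (add_le_add d2 d3) ?_)
        simp only [smul_eq_mul]
        omega
      · refine (totalDegree_mul _ _).trans (le_trans (add_le_add d4 d5) (by omega))
    · intro m x hx
      have h1x : (1 : ℝ) - x ≠ 0 := sub_ne_zero_of_ne ((abs_lt.1 hx).2).ne'
      set b : ℕ → ℝ := fun k =>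
        x ^ (k + m) * (((k + m + (p + 1)).factorial : ℝ) / ((k + m).factorial : ℝ)) with hb_def
      have hb : Summable b := aux_summable (p + 1) m hx
      have hS : HasSum b (∑' k, b k) := hb.hasSum
      set S : ℝ := ∑' k, b k with hS_def
      have hshift : HasSum (fun k => b (k + 1)) (S - b 0) := by
        rw [hasSum_nat_add_iff 1]
        simpa using hS
      have hdiff : HasSum (fun k => b (k + 1) - x * b k) (S - b 0 - x * S) :=
        hshift.sub (hS.mul_left x)
      have hterm : ∀ k, b (k + 1) - x * b k
          = ((p : ℝ) + 1) * (x ^ (k + (m + 1)) *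
              (((k + (m + 1) + p).factorial : ℝ) / ((k + (m + 1)).factorial : ℝ))) := by
        intro k
        simp only [hb_def]
        have e1 : k + 1 + m + (p + 1) = k + m + p + 2 := by omega
        have e2 : k + 1 + m = k + m + 1 := by omega
        have e3 : k + m + (p + 1) = k + m + p + 1 := by omega
        have e4 : k + (m + 1) + p = k + m + p + 1 := by omega
        have e5 : k + (m + 1) = k + m + 1 := by omega
        rw [e1, e2, e3, e4, e5]
        exact step_term p (k + m) x
      have hRHS := (hP (m + 1) x hx).mul_left ((p : ℝ) + 1)
      have key : S - b 0 - x * S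
          = ((p : ℝ) + 1) * (x ^ (m + 1) / (1 - x) ^ (p + 1) *
              MvPolynomial.eval ![x, ((m + 1 : ℕ) : ℝ)] P) := by
        refine HasSum.unique ?_ hRHS
        rw [show (fun k => b (k + 1) - x * b k) = (fun k => ((p : ℝ) + 1) * (x ^ (k + (m + 1)) *
            (((k + (m + 1) + p).factorial : ℝ) / ((k + (m + 1)).factorial : ℝ)))) from
          funext hterm] at hdiff
        exact hdiff
      have hb0 : b 0 = x ^ m * (((m + (p + 1)).factorial : ℝ) / (m.factorial : ℝ)) := by
        simp only [hb_def, Nat.zero_add]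
      set E : ℝ := MvPolynomial.eval ![x, ((m + 1 : ℕ) : ℝ)] P with hE_def
      set F : ℝ := ∏ i ∈ Finset.range (p + 1), ((m : ℝ) + i + 1) with hF_def
      have hb0' : b 0 = x ^ m * F := by rw [hb0, fact_ratio]
      have hevalQ : MvPolynomial.eval ![x, (m : ℝ)]
          ((1 - X 0) ^ (p + 1) * ∏ i ∈ Finset.range (p + 1), (X 1 + C ((i : ℝ) + 1))
            + C ((p : ℝ) + 1) * X 0 * P')
          = (1 - x) ^ (p + 1) * F + ((p : ℝ) + 1) * x * E := by
        have hfun : (fun i => MvPolynomial.eval ![x, (m : ℝ)] (g i)) = ![x, ((m + 1 : ℕ) : ℝ)] := by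
          funext i
          fin_cases i <;> simp [hg_def]
        have hPP : MvPolynomial.eval ![x, (m : ℝ)] P' = E := by
          rw [hP'_def, my_eval_aeval, hfun, hE_def]
        simp only [map_add, map_mul, map_pow, map_sub, map_one, eval_X, eval_C,
          Matrix.cons_val_zero, Matrix.cons_val_one, Matrix.head_cons, map_prod, hPP, hF_def,
          ← add_assoc]
      rw [hevalQ]
      have hgoal : x ^ m / (1 - x) ^ (p + 1 + 1) * ((1 - x) ^ (p + 1) * F + ((p : ℝ) + 1) * x * E)
          = S := by
        rw [hb0'] at key
        have hpow : ((1 : ℝ) - x) ^ (p + 1) ≠ 0 := pow_ne_zero _ h1x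
        field_simp at key ⊢
        ring_nf at key ⊢
        linarith [key]
      rw [hgoal]
      exact hS
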